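/- Let A = {a_0 < a_1 < … < a_d} and 1 < β ≤ 1 + (a_d − a_0)/max_j(a_{j+1} − a_j). A sequence (u_k)_{k≥1} ∈ A^ℕ is the unique β-expansion of its value if and only if for every i ≥ 1: (i) whenever u_i = a_j with j < d one has Σ_{k≥0} u_{i+k} β^{-k} < a_{j+1} + a_0/(β−1), and (ii) whenever u_i = a_j with j > 0 one has Σ_{k≥0} u_{i+k} β^{-k} > a_{j−1} + a_d/(β−1). -/

import Mathlib

open Finset Filter Topology

private lemma ped_mono {d : ℕ} {a : ℕ → ℝ} (ha : ∀ i < d, a i < a (i + 1)) :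
    ∀ i j, i ≤ j → j ≤ d → a i ≤ a j := by
  intro i j hij hjd
  induction j, hij using Nat.le_induction with
  | base => exact le_rfl
  | succ n hn ih => exact (ih (by omega)).trans (ha n (by omega)).le

private lemma ped_strict {d : ℕ} {a : ℕ → ℝ} (ha : ∀ i < d, a i < a (i + 1)) :
    ∀ i j, i < j → j ≤ d → a i < a j := by
  intro i j hij hjd
  obtain ⟨m, rfl⟩ : ∃ m, j = m + 1 := ⟨j - 1, by omega⟩
  exact lt_of_le_of_lt (ped_mono ha i m (by omega) (by omega)) (ha m (by omega))

private lemma ped_gap {d : ℕ} (hd : 0 < d) {a : ℕ → ℝ} (ha : ∀ i < d, a i < a (i + 1))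
    {β : ℝ} (hβ1 : 1 < β)
    (hβ2 : β ≤ 1 + (a d - a 0) /
      ((Finset.range d).sup' (Finset.nonempty_range_iff.2 hd.ne') fun j => a (j + 1) - a j)) :
    ∀ j < d, a (j + 1) - a j ≤ a d / (β - 1) - a 0 / (β - 1) := by
  intro j hj
  set M := (Finset.range d).sup' (Finset.nonempty_range_iff.2 hd.ne')
    (fun j => a (j + 1) - a j) with hM
  have hle : a (j + 1) - a j ≤ M :=
    Finset.le_sup' (fun j => a (j + 1) - a j) (Finset.mem_range.2 hj)
  have hMpos : 0 < M := lt_of_lt_of_le (sub_pos.2 (ha j hj)) hle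
  have hβ : 0 < β - 1 := by linarith
  have h1 : (β - 1) * M ≤ a d - a 0 := by
    have h2 : β - 1 ≤ (a d - a 0) / M := by linarith
    calc (β - 1) * M ≤ ((a d - a 0) / M) * M := by nlinarith
    _ = a d - a 0 := by field_simp
  rw [← sub_div, le_div_iff₀ hβ]
  nlinarith

private lemma ped_hasSum_const {β : ℝ} (hβ1 : 1 < β) (c : ℝ) :
    HasSum (fun k : ℕ => c / β ^ (k + 1)) (c / (β - 1)) := by
  have hβ0 : (0:ℝ) < β := by linarith
  have hβne : β ≠ 0 := ne_of_gt hβ0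
  have h1 : (0:ℝ) ≤ 1 / β := by positivity
  have h2 : 1 / β < 1 := by rw [div_lt_one hβ0]; linarith
  have key := (hasSum_geometric_of_lt_one h1 h2).mul_left (c / β)
  have hfun : (fun k : ℕ => c / β * (1 / β) ^ k) = fun k : ℕ => c / β ^ (k + 1) := by
    funext k
    rw [div_pow, one_pow, pow_succ]
    ring
  have hval : c / β * (1 - 1 / β)⁻¹ = c / (β - 1) := by
    have h3 : (1:ℝ) - 1 / β = (β - 1) / β := by field_simp
    rw [h3, inv_div, div_mul_div_comm, mul_comm c β, mul_div_mul_left _ _ hβne]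
  rw [hfun, hval] at key
  exact key

private lemma ped_summable {d : ℕ} {a : ℕ → ℝ} (ha : ∀ i < d, a i < a (i + 1))
    {β : ℝ} (hβ1 : 1 < β) {w : ℕ → ℕ} (hw : ∀ k, w k ≤ d) :
    Summable (fun k : ℕ => a (w k) / β ^ (k + 1)) := by
  have hβ0 : (0:ℝ) < β := by linarith
  set C := max |a 0| |a d| with hC
  refine Summable.of_norm_bounded (g := fun k : ℕ => C / β ^ (k + 1))
    (ped_hasSum_const hβ1 C).summable fun k => ?_
  have h1 : a 0 ≤ a (w k) := ped_mono ha 0 (w k) (Nat.zero_le _) (hw k)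
  have h2 : a (w k) ≤ a d := ped_mono ha (w k) d (hw k) le_rfl
  have habs : |a (w k)| ≤ C := by
    rw [abs_le]
    constructor
    · have := neg_abs_le (a 0); have := le_max_left |a 0| |a d|; linarith
    · have := le_abs_self (a d); have := le_max_right |a 0| |a d|; linarith
  have hpow : (0:ℝ) < β ^ (k + 1) := by positivity
  rw [norm_div, Real.norm_eq_abs, Real.norm_eq_abs, abs_of_pos hpow]
  exact (div_le_div_iff_of_pos_right hpow).2 habs

private lemma ped_bounds {d : ℕ} {a : ℕ → ℝ} (ha : ∀ i < d, a i < a (i + 1))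
    {β : ℝ} (hβ1 : 1 < β) {w : ℕ → ℕ} (hw : ∀ k, w k ≤ d) :
    a 0 / (β - 1) ≤ (∑' k : ℕ, a (w k) / β ^ (k + 1)) ∧
      (∑' k : ℕ, a (w k) / β ^ (k + 1)) ≤ a d / (β - 1) := by
  have hs := ped_summable ha hβ1 hw
  constructor
  · have h := Summable.tsum_le_tsum (f := fun k : ℕ => a 0 / β ^ (k + 1))
      (g := fun k : ℕ => a (w k) / β ^ (k + 1))
      (fun k => by
        have h1 : a 0 ≤ a (w k) := ped_mono ha 0 (w k) (Nat.zero_le _) (hw k)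
        have hp : (0:ℝ) < β ^ (k + 1) := by positivity
        exact (div_le_div_iff_of_pos_right hp).2 h1)
      (ped_hasSum_const hβ1 (a 0)).summable hs
    rwa [(ped_hasSum_const hβ1 (a 0)).tsum_eq] at h
  · have h := Summable.tsum_le_tsum (f := fun k : ℕ => a (w k) / β ^ (k + 1))
      (g := fun k : ℕ => a d / β ^ (k + 1))
      (fun k => by
        have h1 : a (w k) ≤ a d := ped_mono ha (w k) d (hw k) le_rfl
        have hp : (0:ℝ) < β ^ (k + 1) := by positivity
        exact (div_le_div_iff_of_pos_right hp).2 h1)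
      hs (ped_hasSum_const hβ1 (a d)).summable
    rwa [(ped_hasSum_const hβ1 (a d)).tsum_eq] at h

private lemma ped_shift {d : ℕ} {a : ℕ → ℝ} (ha : ∀ i < d, a i < a (i + 1))
    {β : ℝ} (hβ1 : 1 < β) {w : ℕ → ℕ} (hw : ∀ k, w k ≤ d) :
    β * (∑' k : ℕ, a (w k) / β ^ (k + 1)) =
      a (w 0) + ∑' k : ℕ, a (w (k + 1)) / β ^ (k + 1) := by
  have hβne : β ≠ 0 := by intro h; rw [h] at hβ1; linarith
  have hs := ped_summable ha hβ1 hw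
  rw [Summable.tsum_eq_zero_add hs]
  have h1 : (∑' k : ℕ, a (w (k + 1)) / β ^ (k + 1 + 1)) =
      (∑' k : ℕ, a (w (k + 1)) / β ^ (k + 1)) / β := by
    rw [← tsum_div_const]
    refine tsum_congr fun k => ?_
    rw [div_div, ← pow_succ]
  rw [h1, pow_one, mul_add]
  field_simp

private lemma ped_exists {d : ℕ} (hd : 0 < d) {a : ℕ → ℝ} (ha : ∀ i < d, a i < a (i + 1))
    {β : ℝ} (hβ1 : 1 < β)
    (hgap : ∀ j < d, a (j + 1) - a j ≤ a d / (β - 1) - a 0 / (β - 1))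
    {x : ℝ} (hx1 : a 0 / (β - 1) ≤ x) (hx2 : x ≤ a d / (β - 1)) :
    ∃ w : ℕ → ℕ, (∀ k, w k ≤ d) ∧ (∑' k : ℕ, a (w k) / β ^ (k + 1)) = x := by
  classical
  have hβ0 : (0:ℝ) < β := by linarith
  have hβne : β ≠ 0 := ne_of_gt hβ0
  have hβ' : (0:ℝ) < β - 1 := by linarith
  set c0 := a 0 / (β - 1) with hc0
  set cd := a d / (β - 1) with hcd
  let P : ℝ → ℕ → Prop := fun y j => a j ≤ β * y - c0
  let D : ℝ → ℕ := fun y => Nat.findGreatest (P y) d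
  let T : ℝ → ℝ := fun y => β * y - a (D y)
  have hD_le : ∀ y, D y ≤ d := fun y => Nat.findGreatest_le d
  have hc0eq : β * c0 - c0 = a 0 := by rw [hc0]; field_simp
  have hcdeq : β * cd - a d = cd := by rw [hcd]; field_simp; ring
  have hDspec : ∀ y, c0 ≤ y → a (D y) ≤ β * y - c0 := by
    intro y hy
    have hP0 : P y 0 := by simp only [P]; nlinarith
    exact Nat.findGreatest_spec (Nat.zero_le d) hP0
  have hT : ∀ y, c0 ≤ y → y ≤ cd → c0 ≤ T y ∧ T y ≤ cd := by
    intro y hy1 hy2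
    constructor
    · have := hDspec y hy1
      simp only [T]; linarith
    · by_cases hcase : D y = d
      · simp only [T, hcase]; nlinarith
      · have hlt : D y < d := lt_of_le_of_ne (hD_le y) hcase
        have hnot : ¬ P y (D y + 1) :=
          Nat.findGreatest_is_greatest (Nat.lt_succ_self _) (by omega)
        simp only [P, not_le] at hnot
        have hg := hgap (D y) hlt
        simp only [T]; linarith
  let s : ℕ → ℝ := fun n => T^[n] x
  have hs0 : s 0 = x := rfl
  have hsrec : ∀ n, s (n + 1) = T (s n) := by
    intro n; simp only [s, Function.iterate_succ_apply']
  have hsmem : ∀ n, c0 ≤ s n ∧ s n ≤ cd := by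
    intro n
    induction n with
    | zero => exact ⟨hx1, hx2⟩
    | succ n ih => rw [hsrec n]; exact hT _ ih.1 ih.2
  let w : ℕ → ℕ := fun n => D (s n)
  have hw : ∀ n, w n ≤ d := fun n => hD_le _
  have hsrec' : ∀ n, s (n + 1) = β * s n - a (w n) := fun n => hsrec n
  have hpartial : ∀ n, x = (∑ k ∈ Finset.range n, a (w k) / β ^ (k + 1)) + s n / β ^ n := by
    intro n
    induction n with
    | zero => simp [hs0]
    | succ n ih =>
      have hkey : a (w n) / β ^ (n + 1) + s (n + 1) / β ^ (n + 1) = s n / β ^ n := by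
        rw [hsrec' n, pow_succ]
        field_simp
        ring
      rw [Finset.sum_range_succ, add_assoc, hkey]
      exact ih
  have hsum := ped_summable ha hβ1 (w := w) hw
  have htends := hsum.hasSum.tendsto_sum_nat
  set C' := max |c0| |cd| with hC'
  have hzero : Tendsto (fun n => x - ∑ k ∈ Finset.range n, a (w k) / β ^ (k + 1))
      atTop (𝓝 0) := by
    refine squeeze_zero_norm (a := fun n => C' * (1 / β) ^ n) (fun n => ?_) ?_
    · have hd1 : x - ∑ k ∈ Finset.range n, a (w k) / β ^ (k + 1) = s n / β ^ n := by
        have := hpartial n; linarith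
      have habs : |s n| ≤ C' := by
        rw [abs_le]
        constructor
        · have := (hsmem n).1
          have := neg_abs_le c0
          have := le_max_left |c0| |cd|
          linarith
        · have := (hsmem n).2
          have := le_abs_self cd
          have := le_max_right |c0| |cd|
          linarith
      have hpow : (0:ℝ) < β ^ n := by positivity
      have hn : ‖s n / β ^ n‖ = |s n| / β ^ n := by
        rw [Real.norm_eq_abs, abs_div, abs_of_pos hpow]
      have hC : C' * (1 / β) ^ n = C' / β ^ n := by
        rw [div_pow, one_pow]; ring
      rw [hd1, hn]
      show |s n| / β ^ n ≤ C' * (1 / β) ^ n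
      rw [hC]
      exact (div_le_div_iff_of_pos_right hpow).2 habs
    · have h1 : (0:ℝ) ≤ 1 / β := by positivity
      have h2 : 1 / β < 1 := by rw [div_lt_one hβ0]; linarith
      simpa using (tendsto_pow_atTop_nhds_zero_of_lt_one h1 h2).const_mul C'
  have htends2 : Tendsto (fun n => ∑ k ∈ Finset.range n, a (w k) / β ^ (k + 1))
      atTop (𝓝 x) := by
    have := tendsto_const_nhds (x := x) (f := atTop (α := ℕ)) |>.sub hzero
    simpa using this
  exact ⟨w, hw, tendsto_nhds_unique htends htends2⟩

private lemma ped_factor {a : ℕ → ℝ} {β : ℝ} (hβ1 : 1 < β) (w : ℕ → ℕ) (i : ℕ) :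
    (∑' k : ℕ, a (w (i + k)) / β ^ (i + k + 1)) =
      (∑' k : ℕ, a (w (i + k)) / β ^ (k + 1)) / β ^ i := by
  rw [← tsum_div_const]
  refine tsum_congr fun k => ?_
  rw [div_div, ← pow_add, show k + 1 + i = i + k + 1 from by omega]

private lemma ped_modify {d : ℕ} (hd : 0 < d) {a : ℕ → ℝ} (ha : ∀ i < d, a i < a (i + 1))
    {β : ℝ} (hβ1 : 1 < β)
    (hgap : ∀ j < d, a (j + 1) - a j ≤ a d / (β - 1) - a 0 / (β - 1))
    {u : ℕ → ℕ} (hu : ∀ k, u k ≤ d) (i m : ℕ) (hm : m ≤ d)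
    (hx1 : a 0 / (β - 1) ≤ β * (∑' k : ℕ, a (u (i + k)) / β ^ (k + 1)) - a m)
    (hx2 : β * (∑' k : ℕ, a (u (i + k)) / β ^ (k + 1)) - a m ≤ a d / (β - 1)) :
    ∃ v : ℕ → ℕ, (∀ k, v k ≤ d) ∧
      (∑' k : ℕ, a (v k) / β ^ (k + 1)) = (∑' k : ℕ, a (u k) / β ^ (k + 1)) ∧ v i = m := by
  classical
  have hβ0 : (0:ℝ) < β := by linarith
  have hβne : β ≠ 0 := ne_of_gt hβ0
  obtain ⟨w, hwle, hwsum⟩ := ped_exists hd ha hβ1 hgap hx1 hx2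
  set v : ℕ → ℕ := fun k => if k < i then u k else if k = i then m else w (k - (i + 1))
    with hvdef
  have hvi : v i = m := by simp [hvdef]
  have hvle : ∀ k, v k ≤ d := by
    intro k
    simp only [hvdef]
    split_ifs with h1 h2
    · exact hu k
    · exact hm
    · exact hwle _
  have hsv := ped_summable ha hβ1 hvle
  have hsu := ped_summable ha hβ1 hu
  have htail : (∑' k : ℕ, a (v (i + k)) / β ^ (k + 1)) =
      (∑' k : ℕ, a (u (i + k)) / β ^ (k + 1)) := by
    have hshift := ped_shift ha hβ1 (w := fun k => v (i + k)) (fun k => hvle _)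
    have h0 : v (i + 0) = m := by rw [Nat.add_zero]; exact hvi
    have h1 : (∑' k : ℕ, a (v (i + (k + 1))) / β ^ (k + 1)) =
        ∑' k : ℕ, a (w k) / β ^ (k + 1) := by
      refine tsum_congr fun k => ?_
      have hvw : v (i + (k + 1)) = w k := by
        simp only [hvdef]
        rw [if_neg (by omega), if_neg (by omega)]
        congr 1
        omega
      rw [hvw]
    beta_reduce at hshift
    rw [h0, h1, hwsum] at hshift
    have h2 : β * (∑' k : ℕ, a (v (i + k)) / β ^ (k + 1)) =
        β * (∑' k : ℕ, a (u (i + k)) / β ^ (k + 1)) := by linarith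
    exact mul_left_cancel₀ hβne h2
  have hsplitv := Summable.sum_add_tsum_nat_add (f := fun k : ℕ => a (v k) / β ^ (k + 1)) i hsv
  have hsplitu := Summable.sum_add_tsum_nat_add (f := fun k : ℕ => a (u k) / β ^ (k + 1)) i hsu
  have hpre : ∑ k ∈ Finset.range i, a (v k) / β ^ (k + 1) =
      ∑ k ∈ Finset.range i, a (u k) / β ^ (k + 1) := by
    refine Finset.sum_congr rfl fun k hk => ?_
    have hk' : k < i := Finset.mem_range.1 hk
    simp only [hvdef]
    rw [if_pos hk']
  have e1 : ∀ z : ℕ → ℕ, (∑' k : ℕ, a (z (k + i)) / β ^ (k + i + 1)) =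
      (∑' k : ℕ, a (z (i + k)) / β ^ (k + 1)) / β ^ i := by
    intro z
    rw [← ped_factor hβ1 z i]
    refine tsum_congr fun k => ?_
    rw [add_comm k i]
  have htv : (∑' k : ℕ, a (v (k + i)) / β ^ (k + i + 1)) =
      (∑' k : ℕ, a (u (k + i)) / β ^ (k + i + 1)) := by
    rw [e1 v, e1 u, htail]
  refine ⟨v, hvle, ?_, hvi⟩
  rw [← hsplitv, ← hsplitu, hpre]
  rw [htv]

private lemma ped_tail_eq {d : ℕ} {a : ℕ → ℝ} (ha : ∀ i < d, a i < a (i + 1))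
    {β : ℝ} (hβ1 : 1 < β) {u v : ℕ → ℕ} (hu : ∀ k, u k ≤ d) (hv : ∀ k, v k ≤ d)
    (heq : (∑' k : ℕ, a (v k) / β ^ (k + 1)) = (∑' k : ℕ, a (u k) / β ^ (k + 1)))
    (i : ℕ) (hpre : ∀ k < i, a (v k) = a (u k)) :
    (∑' k : ℕ, a (v (i + k)) / β ^ (k + 1)) = (∑' k : ℕ, a (u (i + k)) / β ^ (k + 1)) := by
  have hβ0 : (0:ℝ) < β := by linarith
  have hsv := ped_summable ha hβ1 hv
  have hsu := ped_summable ha hβ1 hu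
  have hsplitv := Summable.sum_add_tsum_nat_add (f := fun k : ℕ => a (v k) / β ^ (k + 1)) i hsv
  have hsplitu := Summable.sum_add_tsum_nat_add (f := fun k : ℕ => a (u k) / β ^ (k + 1)) i hsu
  have hpre' : ∑ k ∈ Finset.range i, a (v k) / β ^ (k + 1) =
      ∑ k ∈ Finset.range i, a (u k) / β ^ (k + 1) :=
    Finset.sum_congr rfl fun k hk => by rw [hpre k (Finset.mem_range.1 hk)]
  have e1 : ∀ z : ℕ → ℕ, (∑' k : ℕ, a (z (k + i)) / β ^ (k + i + 1)) =
      (∑' k : ℕ, a (z (i + k)) / β ^ (k + 1)) / β ^ i := by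
    intro z
    rw [← ped_factor hβ1 z i]
    refine tsum_congr fun k => ?_
    rw [add_comm k i]
  rw [e1 v] at hsplitv
  rw [e1 u] at hsplitu
  have hpne : (β : ℝ) ^ i ≠ 0 := by positivity
  have h2 : (∑' k : ℕ, a (v (i + k)) / β ^ (k + 1)) / β ^ i =
      (∑' k : ℕ, a (u (i + k)) / β ^ (k + 1)) / β ^ i := by linarith
  field_simp at h2
  exact h2

/-- Pedicini's lexicographic characterization of unique expansions. -/
theorem stmt_3 (d : ℕ) (hd : 0 < d) (a : ℕ → ℝ) (ha : ∀ i < d, a i < a (i + 1))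
    (β : ℝ) (hβ1 : 1 < β)
    (hβ2 : β ≤ 1 + (a d - a 0) /
      ((Finset.range d).sup' (Finset.nonempty_range_iff.2 hd.ne') fun j => a (j + 1) - a j))
    (u : ℕ → ℕ) (hu : ∀ k, u k ≤ d) :
    ((∀ v : ℕ → ℕ, (∀ k, v k ≤ d) →
        (∑' k : ℕ, a (v k) / β ^ (k + 1)) = (∑' k : ℕ, a (u k) / β ^ (k + 1)) →
        ∀ k, a (v k) = a (u k))
      ↔ (∀ i : ℕ,
          (u i < d → (∑' k : ℕ, a (u (i + k)) / β ^ k) < a (u i + 1) + a 0 / (β - 1)) ∧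
          (0 < u i → (∑' k : ℕ, a (u (i + k)) / β ^ k) > a (u i - 1) + a d / (β - 1)))) := by
  classical
  have hβ0 : (0:ℝ) < β := by linarith
  have hβne : β ≠ 0 := ne_of_gt hβ0
  have hgap := ped_gap hd ha hβ1 hβ2
  have hy : ∀ (z : ℕ → ℕ) (i : ℕ), (∑' k : ℕ, a (z (i + k)) / β ^ k) =
      β * (∑' k : ℕ, a (z (i + k)) / β ^ (k + 1)) := by
    intro z i
    rw [← tsum_mul_left]
    refine tsum_congr fun k => ?_
    rw [pow_succ]
    field_simp
  have htailrec : ∀ (z : ℕ → ℕ), (∀ k, z k ≤ d) → ∀ i : ℕ,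
      β * (∑' k : ℕ, a (z (i + k)) / β ^ (k + 1)) =
        a (z i) + (∑' k : ℕ, a (z ((i + 1) + k)) / β ^ (k + 1)) := by
    intro z hz i
    have h := ped_shift ha hβ1 (w := fun k => z (i + k)) (fun k => hz _)
    have h2 : (∑' k : ℕ, a (z (i + (k + 1))) / β ^ (k + 1)) =
        ∑' k : ℕ, a (z ((i + 1) + k)) / β ^ (k + 1) :=
      tsum_congr fun k => by rw [show i + (k + 1) = (i + 1) + k from by omega]
    calc β * (∑' k : ℕ, a (z (i + k)) / β ^ (k + 1))
        = a (z (i + 0)) + ∑' k : ℕ, a (z (i + (k + 1))) / β ^ (k + 1) := h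
      _ = a (z i) + ∑' k : ℕ, a (z ((i + 1) + k)) / β ^ (k + 1) := by
          rw [Nat.add_zero, h2]
  constructor
  · intro H i
    constructor
    · intro hid
      by_contra hcon
      push_neg at hcon
      rw [hy u i] at hcon
      have hb := ped_bounds ha hβ1 (w := fun k => u ((i + 1) + k)) (fun k => hu _)
      have ht := htailrec u hu i
      have hstrict : a (u i) < a (u i + 1) := ha (u i) hid
      have hx1 : a 0 / (β - 1) ≤ β * (∑' k : ℕ, a (u (i + k)) / β ^ (k + 1)) - a (u i + 1) := by
        linarith
      have hx2 : β * (∑' k : ℕ, a (u (i + k)) / β ^ (k + 1)) - a (u i + 1) ≤ a d / (β - 1) := by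
        linarith [hb.2]
      obtain ⟨v, hvle, hveq, hvi⟩ :=
        ped_modify hd ha hβ1 hgap hu i (u i + 1) (by omega) hx1 hx2
      have hvu := H v hvle hveq i
      rw [hvi] at hvu
      exact absurd hvu (ne_of_gt hstrict)
    · intro hpos
      by_contra hcon
      push_neg at hcon
      rw [hy u i] at hcon
      have hb := ped_bounds ha hβ1 (w := fun k => u ((i + 1) + k)) (fun k => hu _)
      have ht := htailrec u hu i
      have hstrict : a (u i - 1) < a (u i) :=
        ped_strict ha (u i - 1) (u i) (by omega) (hu i)
      have hx2 : β * (∑' k : ℕ, a (u (i + k)) / β ^ (k + 1)) - a (u i - 1) ≤ a d / (β - 1) := by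
        linarith
      have hx1 : a 0 / (β - 1) ≤ β * (∑' k : ℕ, a (u (i + k)) / β ^ (k + 1)) - a (u i - 1) := by
        linarith [hb.1]
      obtain ⟨v, hvle, hveq, hvi⟩ :=
        ped_modify hd ha hβ1 hgap hu i (u i - 1) (by have := hu i; omega) hx1 hx2
      have hvu := H v hvle hveq i
      rw [hvi] at hvu
      exact absurd hvu (ne_of_lt hstrict)
  · intro C v hvle hveq k
    induction k using Nat.strong_induction_on with
    | _ i ih =>
      by_contra hne
      have htl := ped_tail_eq ha hβ1 hu hvle hveq i ih
      have hv1 := htailrec v hvle i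
      have hbv := ped_bounds ha hβ1 (w := fun k => v ((i + 1) + k)) (fun k => hvle _)
      rcases lt_trichotomy (v i) (u i) with hlt | heq | hgt
      · have h0 : 0 < u i := by omega
        have hle2 : a (v i) ≤ a (u i - 1) :=
          ped_mono ha (v i) (u i - 1) (by omega) (by have := hu i; omega)
        have hgt2 := (C i).2 h0
        rw [hy u i, ← htl] at hgt2
        linarith [hbv.2]
      · exact hne (by rw [heq])
      · have hd2 : u i < d := by have := hvle i; omega
        have hle2 : a (u i + 1) ≤ a (v i) :=
          ped_mono ha (u i + 1) (v i) (by omega) (hvle i)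
        have hlt2 := (C i).1 hd2
        rw [hy u i, ← htl] at hlt2
        linarith [hbv.1]
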